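/- arXiv:2412.16916 — 2 statements merged into one kernel-verified Lean document; each statement's English description precedes it below -/
import Mathlib

section
/- Let a > 0 and let τ be an integer with τ ≥ log(1/δ)/a + Δ for some positive integer Δ and δ ∈ (0,1]. If X is drawn from the truncated discrete Laplace distribution DLap_τ(a) (supported on integers in [-τ, τ] with mass at x proportional to e^{-a|x|}), then Pr[X > τ - Δ] ≤ δ. -/
noncomputable def prob {Ω : Type*} (P : Ω → ℝ) (W : Set Ω) : ℝ := ∑' ω, W.indicator P ω

def Indist {Ω : Type*} (ε δ : ℝ) (P Q : Ω → ℝ) : Prop :=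
  ∀ W : Set Ω, prob P W ≤ Real.exp ε * prob Q W + δ ∧ prob Q W ≤ Real.exp ε * prob P W + δ

noncomputable def dlapTrunc (a : ℝ) (τ : ℤ) (x : ℤ) : ℝ :=
  if |x| ≤ τ then
    Real.exp (-a * |(x : ℝ)|) / (∑ y ∈ Finset.Icc (-τ) τ, Real.exp (-a * |(y : ℝ)|))
  else 0

noncomputable def dlap (a : ℝ) (x : ℤ) : ℝ :=
  Real.exp (-a * |(x : ℝ)|) * (Real.exp a - 1) / (Real.exp a + 1)

theorem truncated_dlap_tail (a : ℝ) (ha : 0 < a) (τ Δ : ℤ) (hΔ : 1 ≤ Δ)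
    (δ : ℝ) (hδ0 : 0 < δ) (hδ1 : δ ≤ 1)
    (hτ : Real.log (1 / δ) / a + (Δ : ℝ) ≤ (τ : ℝ)) :
    prob (dlapTrunc a τ) {x : ℤ | τ - Δ < x} ≤ δ := by
  have hlog : 0 ≤ Real.log (1 / δ) := Real.log_nonneg (by rw [le_div_iff₀ hδ0]; linarith)
  have hlda : 0 ≤ Real.log (1 / δ) / a := div_nonneg hlog ha.le
  have hτΔR : (Δ : ℝ) ≤ (τ : ℝ) := by linarith
  have hΔτ : Δ ≤ τ := by exact_mod_cast hτΔR
  set S := ∑ y ∈ Finset.Icc (-τ) τ, Real.exp (-a * |(y : ℝ)|) with hS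
  have hSpos : 0 < S :=
    Finset.sum_pos (fun y _ => Real.exp_pos _) ⟨0, by simp; omega⟩
  have hprob : prob (dlapTrunc a τ) {x : ℤ | τ - Δ < x}
      = ∑ x ∈ Finset.Icc (τ - Δ + 1) τ, Real.exp (-a * (x : ℝ)) / S := by
    rw [prob, tsum_eq_sum (s := Finset.Icc (τ - Δ + 1) τ) ?_]
    · apply Finset.sum_congr rfl
      intro x hx
      simp only [Finset.mem_Icc] at hx
      have h1 : τ - Δ < x := by omega
      have h2 : |x| ≤ τ := abs_le.mpr ⟨by omega, by omega⟩
      rw [Set.indicator_of_mem (show x ∈ {x : ℤ | τ - Δ < x} from h1), dlapTrunc, if_pos h2]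
      have hx0 : (0 : ℝ) ≤ (x : ℝ) := by exact_mod_cast (by omega : (0:ℤ) ≤ x)
      rw [abs_of_nonneg hx0]
    · intro x hx
      simp only [Finset.mem_Icc, not_and_or, not_le, not_lt] at hx
      rcases hx with h | h
      · exact Set.indicator_of_notMem (by simp; omega) _
      · rw [Set.indicator_apply]; split
        · rw [dlapTrunc, if_neg (not_le.mpr (lt_of_lt_of_le h (le_abs_self x)))]
        · rfl
  rw [hprob, ← Finset.sum_div, div_le_iff₀ hSpos]
  have hT : ∑ x ∈ Finset.Icc (τ - Δ + 1) τ, Real.exp (-a * (x : ℝ))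
      = Real.exp (-a * ((τ : ℝ) - Δ + 1)) *
        ∑ y ∈ Finset.Icc 0 (Δ - 1), Real.exp (-a * |(y : ℝ)|) := by
    rw [Finset.mul_sum]
    apply Finset.sum_nbij' (i := fun x => x - (τ - Δ + 1)) (j := fun y => y + (τ - Δ + 1))
    · intro x hx; simp only [Finset.mem_Icc] at *; omega
    · intro y hy; simp only [Finset.mem_Icc] at *; omega
    · intro x hx; ring
    · intro y hy; ring
    · intro x hx
      simp only [Finset.mem_Icc] at hx
      have hy0 : (0:ℤ) ≤ x - (τ - Δ + 1) := by omega
      have : |((x - (τ - Δ + 1) : ℤ) : ℝ)| = ((x - (τ - Δ + 1) : ℤ) : ℝ) :=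
        abs_of_nonneg (by exact_mod_cast hy0)
      rw [this, ← Real.exp_add]
      push_cast
      ring_nf
  rw [hT]
  have hTle : ∑ y ∈ Finset.Icc 0 (Δ - 1), Real.exp (-a * |(y : ℝ)|) ≤ S := by
    apply Finset.sum_le_sum_of_subset_of_nonneg
    · intro y hy; simp only [Finset.mem_Icc] at *; omega
    · intro y _ _; exact (Real.exp_pos _).le
  have hexp : Real.exp (-a * ((τ : ℝ) - Δ + 1)) ≤ δ := by
    have h1 : -a * ((τ : ℝ) - Δ + 1) ≤ -Real.log (1 / δ) := by
      have : Real.log (1 / δ) ≤ a * ((τ : ℝ) - Δ) := by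
        rw [← div_le_iff₀' ha] at *; linarith
      nlinarith
    calc Real.exp (-a * ((τ : ℝ) - Δ + 1)) ≤ Real.exp (-Real.log (1 / δ)) :=
          Real.exp_le_exp.mpr h1
      _ = δ := by rw [Real.exp_neg, Real.exp_log (by positivity), one_div, inv_inv]
  calc Real.exp (-a * ((τ : ℝ) - Δ + 1)) * ∑ y ∈ Finset.Icc 0 (Δ - 1), Real.exp (-a * |(y : ℝ)|)
      ≤ δ * S := by
        apply mul_le_mul hexp hTle (Finset.sum_nonneg fun y _ => (Real.exp_pos _).le) hδ0.le
end

section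
/- For every ε > 0, δ ∈ (0,1], positive integer Δ, and vectors u, v ∈ ℤ^d with ‖u - v‖₁ ≤ Δ such that u - v has at most s nonzero coordinates, if τ ≥ Δ·(1 + log(s/δ)/ε), then the distributions P and Q of u + ξ and v + ξ, where ξ has i.i.d. coordinates from the truncated discrete Laplace distribution DLap_τ(ε/Δ), satisfy (ε, δ)-indistinguishability. -/
namespace TDLap

open Finset

noncomputable def Z (a : ℝ) (τ : ℤ) : ℝ := ∑ y ∈ Finset.Icc (-τ) τ, Real.exp (-a * |(y : ℝ)|)

lemma Z_pos {a : ℝ} {τ : ℤ} (hτ : 0 ≤ τ) : 0 < Z a τ := by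
  refine Finset.sum_pos (fun i _ => Real.exp_pos _) ⟨0, by simp [hτ, neg_nonpos.mpr hτ]⟩

lemma dlapTrunc_nonneg (a : ℝ) (τ x : ℤ) : 0 ≤ dlapTrunc a τ x := by
  unfold dlapTrunc
  split
  · exact div_nonneg (Real.exp_pos _).le (Finset.sum_nonneg fun _ _ => (Real.exp_pos _).le)
  · exact le_refl 0

lemma dlapTrunc_eq_zero {a : ℝ} {τ x : ℤ} (h : ¬ |x| ≤ τ) : dlapTrunc a τ x = 0 := if_neg h

lemma dlapTrunc_of_le {a : ℝ} {τ x : ℤ} (h : |x| ≤ τ) :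
    dlapTrunc a τ x = Real.exp (-a * |(x : ℝ)|) / Z a τ := if_pos h

lemma sum_dlapTrunc {a : ℝ} {τ : ℤ} (hτ : 0 ≤ τ) :
    ∑ x ∈ Finset.Icc (-τ) τ, dlapTrunc a τ x = 1 := by
  have h : ∀ x ∈ Finset.Icc (-τ) τ, dlapTrunc a τ x = Real.exp (-a * |(x : ℝ)|) / Z a τ := by
    intro x hx
    exact dlapTrunc_of_le (abs_le.mpr (Finset.mem_Icc.mp hx))
  rw [Finset.sum_congr rfl h, ← Finset.sum_div]
  exact div_self (Z_pos hτ).ne'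

lemma sum_dlapTrunc_shift {a : ℝ} {τ : ℤ} (hτ : 0 ≤ τ) (u : ℤ) {T : Finset ℤ}
    (hT : Finset.Icc (u - τ) (u + τ) ⊆ T) :
    ∑ x ∈ T, dlapTrunc a τ (x - u) = 1 := by
  rw [← Finset.sum_subset hT (fun x _ hx => ?_)]
  · rw [show Finset.Icc (u - τ) (u + τ) = Finset.map ⟨fun y => y + u, add_left_injective u⟩
      (Finset.Icc (-τ) τ) from ?_, Finset.sum_map]
    · simpa using sum_dlapTrunc (a := a) hτ
    · ext y
      simp [Finset.mem_Icc, Finset.mem_map]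
      constructor
      · intro h; exact ⟨y - u, by omega⟩
      · rintro ⟨z, hz, rfl⟩; omega
  · apply dlapTrunc_eq_zero
    simp only [Finset.mem_Icc, not_and_or, not_le] at hx
    rcases abs_cases (x - u) with ⟨h, _⟩ | ⟨h, _⟩ <;> omega

lemma tail_sum {a : ℝ} {τ : ℤ} (ha : 0 < a) {t : ℤ} (ht0 : 0 ≤ t) (ht : t ≤ τ) :
    ∑ x ∈ Finset.Icc (-τ) τ \ Finset.Icc (-t) t, Real.exp (-a * |(x : ℝ)|)
      ≤ Real.exp (-a * t) * Z a τ := by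
  set D := Finset.Icc (-τ) τ \ Finset.Icc (-t) t with hD
  set φ : ℤ → ℤ := fun x => if 0 < x then x - t else x + t with hφ
  have hmem : ∀ x ∈ D, t < |x| ∧ |x| ≤ τ := by
    intro x hx
    simp only [hD, Finset.mem_sdiff, Finset.mem_Icc, not_and_or, not_le] at hx
    constructor
    · rcases le_or_gt x 0 with h | h
      · rw [abs_of_nonpos h]; omega
      · rw [abs_of_pos h]; omega
    · exact abs_le.mpr hx.1
  have hφabs : ∀ x ∈ D, |φ x| = |x| - t := by
    intro x hx
    obtain ⟨h1, h2⟩ := hmem x hx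
    by_cases hp : 0 < x
    · rw [abs_of_pos hp] at h1 ⊢
      simp only [hφ, if_pos hp]
      rw [abs_of_pos (by omega)]
    · push_neg at hp
      rw [abs_of_nonpos hp] at h1 ⊢
      simp only [hφ, if_neg (not_lt.mpr hp)]
      rw [abs_of_nonpos (by omega)]; ring
  have key : ∀ x ∈ D, Real.exp (-a * |(x : ℝ)|)
      = Real.exp (-a * t) * Real.exp (-a * |((φ x : ℤ) : ℝ)|) := by
    intro x hx
    rw [← Real.exp_add]
    congr 1
    have h := hφabs x hx
    have : |(x : ℝ)| = |((φ x : ℤ) : ℝ)| + t := by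
      push_cast [← Int.cast_abs]
      exact_mod_cast (by omega : |x| = |φ x| + t)
    rw [this]; ring
  rw [Finset.sum_congr rfl key, ← Finset.mul_sum]
  apply mul_le_mul_of_nonneg_left _ (Real.exp_pos _).le
  have hinj : Set.InjOn φ D := by
    intro x hx y hy hxy
    have hx' := hmem x hx; have hy' := hmem y hy
    simp only [hφ] at hxy
    rcases le_or_gt x 0 with h1 | h1 <;> rcases le_or_gt y 0 with h2 | h2 <;>
      [skip; skip; skip; skip] <;>
      simp only [if_pos, if_neg, not_lt.mpr, h1, h2] at hxy <;>
      first
      | omega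
      | (rw [abs_of_nonpos h1] at hx'; rw [abs_of_pos h2] at hy';
         simp [if_neg (not_lt.mpr h1), if_pos h2] at hxy; omega)
      | (rw [abs_of_pos h1] at hx'; rw [abs_of_nonpos h2] at hy';
         simp [if_pos h1, if_neg (not_lt.mpr h2)] at hxy; omega)
      | (rw [abs_of_pos h1] at hx'; rw [abs_of_pos h2] at hy';
         simp [if_pos h1, if_pos h2] at hxy; omega)
      | (rw [abs_of_nonpos h1] at hx'; rw [abs_of_nonpos h2] at hy';
         simp [if_neg (not_lt.mpr h1), if_neg (not_lt.mpr h2)] at hxy; omega)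
  have himg : ∑ i ∈ D, Real.exp (-a * |((φ i : ℤ) : ℝ)|)
      = ∑ y ∈ D.image φ, Real.exp (-a * |((y : ℤ) : ℝ)|) :=
    (Finset.sum_image (f := fun y : ℤ => Real.exp (-a * |((y : ℤ) : ℝ)|)) (fun x hx y hy h => hinj hx hy h)).symm
  rw [himg]
  apply Finset.sum_le_sum_of_subset_of_nonneg
  · intro y hy
    simp only [Finset.mem_image] at hy
    obtain ⟨x, hx, rfl⟩ := hy
    have h1 := hφabs x hx
    have h2 := hmem x hx
    simp only [Finset.mem_Icc]
    constructor <;> [skip; skip] <;>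
      (rcases abs_cases (φ x) with ⟨h, _⟩ | ⟨h, _⟩ <;> omega)
  · intro _ _ _; exact (Real.exp_pos _).le

lemma bad_marginal {a : ℝ} {τ : ℤ} (ha : 0 < a) (u v : ℤ) (huv : |u - v| ≤ τ)
    {T : Finset ℤ} (hT : Finset.Icc (u - τ) (u + τ) ⊆ T) :
    ∑ x ∈ T, (if τ < |x - v| then dlapTrunc a τ (x - u) else 0)
      ≤ Real.exp (-a * ((τ : ℝ) - |((u : ℤ) : ℝ) - v|)) := by
  have hτ0 : 0 ≤ τ := le_trans (abs_nonneg _) huv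
  set t : ℤ := τ - |u - v| with htdef
  have ht0 : 0 ≤ t := by omega
  have ht : t ≤ τ := by have := abs_nonneg (u - v); omega
  -- step 1 : restrict to Icc (u - τ) (u + τ)
  have step1 : ∑ x ∈ T, (if τ < |x - v| then dlapTrunc a τ (x - u) else 0)
      = ∑ x ∈ Finset.Icc (u - τ) (u + τ), (if τ < |x - v| then dlapTrunc a τ (x - u) else 0) := by
    refine (Finset.sum_subset hT fun x _ hx => ?_).symm
    have : dlapTrunc a τ (x - u) = 0 := by
      apply dlapTrunc_eq_zero
      simp only [Finset.mem_Icc, not_and_or, not_le] at hx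
      rcases abs_cases (x - u) with ⟨h, _⟩ | ⟨h, _⟩ <;> omega
    simp [this]
  -- step 2 : reindex by y = x - u
  have step2 : ∑ x ∈ Finset.Icc (u - τ) (u + τ), (if τ < |x - v| then dlapTrunc a τ (x - u) else 0)
      = ∑ y ∈ Finset.Icc (-τ) τ, (if τ < |y + u - v| then dlapTrunc a τ y else 0) := by
    rw [show Finset.Icc (u - τ) (u + τ) = Finset.map ⟨fun y => y + u, add_left_injective u⟩
      (Finset.Icc (-τ) τ) from ?_, Finset.sum_map]
    · simp only [Function.Embedding.coeFn_mk, add_sub_cancel_right]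
    · ext y
      simp only [Finset.mem_Icc, Finset.mem_map, Function.Embedding.coeFn_mk]
      constructor
      · intro h; exact ⟨y - u, by omega, by omega⟩
      · rintro ⟨z, hz, rfl⟩; omega
  -- step 3 : restrict to the tail set D
  set D := Finset.Icc (-τ) τ \ Finset.Icc (-t) t with hD
  have step3 : ∑ y ∈ Finset.Icc (-τ) τ, (if τ < |y + u - v| then dlapTrunc a τ y else 0)
      = ∑ y ∈ D, (if τ < |y + u - v| then dlapTrunc a τ y else 0) := by
    refine (Finset.sum_subset (Finset.sdiff_subset) fun y hy hy' => ?_).symm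
    simp only [hD, Finset.mem_sdiff, not_and_or, not_not] at hy'
    rcases hy' with h | h
    · exact absurd hy h
    · have h1 : |y| ≤ t := abs_le.mpr (Finset.mem_Icc.mp h)
      have h2 : |y + u - v| ≤ τ := by
        calc |y + u - v| ≤ |y| + |u - v| := by
              have := abs_add_le y (u - v); rwa [add_sub_assoc]
        _ ≤ t + |u - v| := by omega
        _ = τ := by omega
      rw [if_neg (not_lt.mpr h2)]
  -- step 4 : bound by the tail of the distribution
  have step4 : ∑ y ∈ D, (if τ < |y + u - v| then dlapTrunc a τ y else 0)
      ≤ ∑ y ∈ D, dlapTrunc a τ y := by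
    refine Finset.sum_le_sum fun y _ => ?_
    split
    · exact le_refl _
    · exact dlapTrunc_nonneg a τ y
  have step5 : ∑ y ∈ D, dlapTrunc a τ y ≤ Real.exp (-a * t) := by
    have hZ : 0 < ∑ y ∈ Finset.Icc (-τ) τ, Real.exp (-a * |(y : ℝ)|) := Z_pos hτ0
    have : ∑ y ∈ D, dlapTrunc a τ y
        = (∑ y ∈ D, Real.exp (-a * |(y : ℝ)|)) /
          (∑ y ∈ Finset.Icc (-τ) τ, Real.exp (-a * |(y : ℝ)|)) := by
      rw [Finset.sum_div]
      refine Finset.sum_congr rfl fun y hy => ?_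
      have : |y| ≤ τ := by
        simp only [hD, Finset.mem_sdiff, Finset.mem_Icc] at hy
        exact abs_le.mpr hy.1
      exact dlapTrunc_of_le this
    rw [this, div_le_iff₀ hZ]
    exact tail_sum ha ht0 ht
  have hcast : ((t : ℤ) : ℝ) = (τ : ℝ) - |((u : ℤ) : ℝ) - v| := by
    push_cast [htdef, ← Int.cast_abs]
    push_cast
    ring
  calc ∑ x ∈ T, (if τ < |x - v| then dlapTrunc a τ (x - u) else 0)
      = ∑ y ∈ D, (if τ < |y + u - v| then dlapTrunc a τ y else 0) := by
        rw [step1, step2, step3]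
    _ ≤ Real.exp (-a * t) := le_trans step4 step5
    _ = Real.exp (-a * ((τ : ℝ) - |((u : ℤ) : ℝ) - v|)) := by rw [hcast]


lemma prob_nonneg {Ω : Type*} {P : Ω → ℝ} (hP : ∀ w, 0 ≤ P w) (W : Set Ω) : 0 ≤ prob P W :=
  tsum_nonneg fun w => Set.indicator_nonneg (fun x _ => hP x) w

lemma one_sided (d : ℕ) (ε δ : ℝ) (hε : 0 < ε) (hδ0 : 0 < δ) (hδ1 : δ ≤ 1)
    (Δ : ℕ) (hΔ : 0 < Δ) (s : ℕ) (hs1 : 1 ≤ s)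
    (u v : Fin d → ℤ) (h1 : (∑ i, |u i - v i|) ≤ (Δ : ℤ))
    (hs : (Finset.univ.filter (fun i => u i ≠ v i)).card ≤ s)
    (τ : ℤ) (hτ : (Δ : ℝ) * (1 + Real.log ((s : ℝ) / δ) / ε) ≤ (τ : ℝ))
    (W : Set (Fin d → ℤ)) :
    prob (fun w : Fin d → ℤ => ∏ i, dlapTrunc (ε / Δ) τ (w i - u i)) W
      ≤ Real.exp ε * prob (fun w : Fin d → ℤ => ∏ i, dlapTrunc (ε / Δ) τ (w i - v i)) W + δ := by
  have hΔR : (0 : ℝ) < Δ := by exact_mod_cast hΔ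
  set a : ℝ := ε / Δ with hadef
  have ha : 0 < a := div_pos hε hΔR
  have hsR : (0 : ℝ) < s := by exact_mod_cast hs1
  have hsδ : (1 : ℝ) ≤ (s : ℝ) / δ := by
    have h1s : (1 : ℝ) ≤ s := by exact_mod_cast hs1
    rw [le_div_iff₀ hδ0]; linarith
  have hlog : 0 ≤ Real.log ((s : ℝ) / δ) := Real.log_nonneg hsδ
  have hΔτR : (Δ : ℝ) ≤ (τ : ℝ) := by
    refine le_trans ?_ hτ
    nlinarith [div_nonneg hlog hε.le]
  have hΔτ : (Δ : ℤ) ≤ τ := by exact_mod_cast hΔτR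
  have hτ0 : 0 ≤ τ := le_trans (by exact_mod_cast hΔ.le) hΔτ
  have haΔ : a * Δ = ε := by rw [hadef]; field_simp
  have haτ : ε + Real.log ((s : ℝ) / δ) ≤ a * τ := by
    have h2 : a * ((Δ : ℝ) * (1 + Real.log ((s : ℝ) / δ) / ε)) ≤ a * τ :=
      mul_le_mul_of_nonneg_left hτ ha.le
    calc ε + Real.log ((s : ℝ) / δ)
        = a * ((Δ : ℝ) * (1 + Real.log ((s : ℝ) / δ) / ε)) := by
          rw [hadef]; field_simp
      _ ≤ a * τ := h2
  have htail : Real.exp (-(a * ((τ : ℝ) - (Δ : ℝ)))) ≤ δ / s := by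
    have h3 : -(a * ((τ : ℝ) - (Δ : ℝ))) ≤ -Real.log ((s : ℝ) / δ) := by
      have : a * ((τ : ℝ) - Δ) = a * τ - ε := by rw [mul_sub, haΔ]
      rw [this]; linarith
    calc Real.exp (-(a * ((τ : ℝ) - (Δ : ℝ)))) ≤ Real.exp (-Real.log ((s : ℝ) / δ)) :=
          Real.exp_le_exp.mpr h3
      _ = δ / s := by
          rw [Real.exp_neg, Real.exp_log (by positivity)]
          rw [inv_div]
  -- per coordinate distance bound
  have hcoord : ∀ i, |u i - v i| ≤ (Δ : ℤ) := fun i =>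
    le_trans (Finset.single_le_sum (fun j _ => abs_nonneg (u j - v j)) (Finset.mem_univ i)) h1
  have hcoordτ : ∀ i, |u i - v i| ≤ τ := fun i => le_trans (hcoord i) hΔτ
  -- the big finite box
  set T : Fin d → Finset ℤ := fun i =>
    Finset.Icc (min (u i) (v i) - τ) (max (u i) (v i) + τ) with hTdef
  have hTu : ∀ i, Finset.Icc (u i - τ) (u i + τ) ⊆ T i := fun i =>
    Finset.Icc_subset_Icc (by omega) (by omega)
  have hTv : ∀ i, Finset.Icc (v i - τ) (v i + τ) ⊆ T i := fun i =>
    Finset.Icc_subset_Icc (by omega) (by omega)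
  set S : Finset (Fin d → ℤ) := Fintype.piFinset T with hSdef
  set P : (Fin d → ℤ) → ℝ := fun w => ∏ i, dlapTrunc a τ (w i - u i) with hPdef
  set Q : (Fin d → ℤ) → ℝ := fun w => ∏ i, dlapTrunc a τ (w i - v i) with hQdef
  have hPnn : ∀ w, 0 ≤ P w := fun w => Finset.prod_nonneg fun i _ => dlapTrunc_nonneg _ _ _
  have hQnn : ∀ w, 0 ≤ Q w := fun w => Finset.prod_nonneg fun i _ => dlapTrunc_nonneg _ _ _
  have hP0 : ∀ w ∉ S, P w = 0 := by
    intro w hw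
    rw [Fintype.mem_piFinset] at hw
    push_neg at hw
    obtain ⟨i, hi⟩ := hw
    refine Finset.prod_eq_zero (Finset.mem_univ i) ?_
    apply dlapTrunc_eq_zero
    have : w i ∉ Finset.Icc (u i - τ) (u i + τ) := fun h => hi (hTu i h)
    simp only [Finset.mem_Icc, not_and_or, not_le] at this
    rcases abs_cases (w i - u i) with ⟨h, _⟩ | ⟨h, _⟩ <;> omega
  have hQ0 : ∀ w ∉ S, Q w = 0 := by
    intro w hw
    rw [Fintype.mem_piFinset] at hw
    push_neg at hw
    obtain ⟨i, hi⟩ := hw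
    refine Finset.prod_eq_zero (Finset.mem_univ i) ?_
    apply dlapTrunc_eq_zero
    have : w i ∉ Finset.Icc (v i - τ) (v i + τ) := fun h => hi (hTv i h)
    simp only [Finset.mem_Icc, not_and_or, not_le] at this
    rcases abs_cases (w i - v i) with ⟨h, _⟩ | ⟨h, _⟩ <;> omega
  have hprobP : ∀ W' : Set (Fin d → ℤ), prob P W' = ∑ w ∈ S, W'.indicator P w := by
    intro W'
    refine tsum_eq_sum fun w hw => ?_
    simp [Set.indicator_apply, hP0 w hw]
  have hprobQ : ∀ W' : Set (Fin d → ℤ), prob Q W' = ∑ w ∈ S, W'.indicator Q w := by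
    intro W'
    refine tsum_eq_sum fun w hw => ?_
    simp [Set.indicator_apply, hQ0 w hw]
  -- the good set
  set G : Set (Fin d → ℤ) := {w | ∀ i, |w i - v i| ≤ τ} with hGdef
  -- pointwise ratio bound on G
  have hpoint : ∀ w ∈ G, P w ≤ Real.exp ε * Q w := by
    intro w hw
    by_cases hsup : ∀ i, |w i - u i| ≤ τ
    · have hZ : 0 < ∑ y ∈ Finset.Icc (-τ) τ, Real.exp (-a * |(y : ℝ)|) := Z_pos hτ0
      have hfac : ∀ i : Fin d, dlapTrunc a τ (w i - u i)
          ≤ Real.exp (a * ((|u i - v i| : ℤ) : ℝ)) * dlapTrunc a τ (w i - v i) := by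
        intro i
        rw [dlapTrunc_of_le (hsup i), dlapTrunc_of_le (hw i), ← mul_div_assoc]
        gcongr
        rw [← Real.exp_add]
        apply Real.exp_le_exp.mpr
        have htri : ((|w i - v i| : ℤ) : ℝ) ≤ ((|w i - u i| : ℤ) : ℝ) + ((|u i - v i| : ℤ) : ℝ) := by
          exact_mod_cast abs_sub_le (w i) (u i) (v i)
        rw [show |((w i - u i : ℤ) : ℝ)| = ((|w i - u i| : ℤ) : ℝ) by push_cast; ring,
          show |((w i - v i : ℤ) : ℝ)| = ((|w i - v i| : ℤ) : ℝ) by push_cast; ring]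
        nlinarith [ha.le]
      calc P w ≤ ∏ i, Real.exp (a * ((|u i - v i| : ℤ) : ℝ)) * dlapTrunc a τ (w i - v i) :=
            Finset.prod_le_prod (fun i _ => dlapTrunc_nonneg _ _ _) (fun i _ => hfac i)
        _ = (∏ i, Real.exp (a * ((|u i - v i| : ℤ) : ℝ))) * Q w := Finset.prod_mul_distrib
        _ ≤ Real.exp ε * Q w := by
            apply mul_le_mul_of_nonneg_right _ (hQnn w)
            rw [← Real.exp_sum]
            apply Real.exp_le_exp.mpr
            rw [← Finset.mul_sum]
            have hsum : (∑ i, ((|u i - v i| : ℤ) : ℝ)) ≤ (Δ : ℝ) := by exact_mod_cast h1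
            nlinarith [ha.le, haΔ]
    · push_neg at hsup
      obtain ⟨i, hi⟩ := hsup
      have : P w = 0 := Finset.prod_eq_zero (Finset.mem_univ i) (dlapTrunc_eq_zero (not_le.mpr hi))
      rw [this]
      exact mul_nonneg (Real.exp_pos _).le (hQnn w)
  -- the bad-event bound
  classical
  set F : Finset (Fin d) := Finset.univ.filter (fun i => u i ≠ v i) with hFdef
  have hbad : ∑ w ∈ S, (Gᶜ).indicator P w ≤ δ := by
    have hptw : ∀ w ∈ S, (Gᶜ).indicator P w
        ≤ ∑ i ∈ F, (if τ < |w i - v i| then P w else 0) := by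
      intro w _
      by_cases hG : w ∈ G
      · rw [Set.indicator_of_notMem (by simpa using hG)]
        exact Finset.sum_nonneg fun i _ => by split; exacts [hPnn w, le_refl 0]
      · rw [Set.indicator_of_mem (by simpa using hG)]
        by_cases hPz : P w = 0
        · rw [hPz]
          exact Finset.sum_nonneg fun i _ => by split <;> exact le_refl 0
        · have hsupp : ∀ j, |w j - u j| ≤ τ := by
            intro j
            by_contra hj
            exact hPz (Finset.prod_eq_zero (Finset.mem_univ j) (dlapTrunc_eq_zero hj))
          simp only [hGdef, Set.mem_setOf_eq, not_forall, not_le] at hG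
          obtain ⟨i, hi⟩ := hG
          have hiF : i ∈ F := by
            simp only [hFdef, Finset.mem_filter, Finset.mem_univ, true_and]
            intro heq
            have hsi := hsupp i
            rw [heq] at hsi
            exact absurd hsi (not_le.mpr hi)
          calc P w = (if τ < |w i - v i| then P w else 0) := by rw [if_pos hi]
            _ ≤ ∑ i ∈ F, (if τ < |w i - v i| then P w else 0) :=
                Finset.single_le_sum (f := fun j => if τ < |w j - v j| then P w else 0)
                  (fun j _ => by split; exacts [hPnn w, le_refl 0]) hiF
    have hmarg : ∀ i ∈ F, ∑ w ∈ S, (if τ < |w i - v i| then P w else 0) ≤ δ / s := by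
      intro i _
      set g : (j : Fin d) → ℤ → ℝ := fun j x =>
        if j = i then (if τ < |x - v i| then dlapTrunc a τ (x - u i) else 0)
        else dlapTrunc a τ (x - u j) with hgdef
      have hgprod : ∀ w ∈ S, (if τ < |w i - v i| then P w else 0) = ∏ j, g j (w j) := by
        intro w _
        by_cases hc : τ < |w i - v i|
        · rw [if_pos hc]
          refine Finset.prod_congr rfl fun j _ => ?_
          by_cases hj : j = i
          · subst hj; simp only [hgdef, if_pos rfl, if_pos hc]
          · simp only [hgdef, if_neg hj]
        · rw [if_neg hc]
          refine (Finset.prod_eq_zero (Finset.mem_univ i) ?_).symm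
          simp only [hgdef, if_pos rfl, if_neg hc]
      rw [Finset.sum_congr rfl hgprod, ← Finset.prod_univ_sum]
      have hother : ∀ j, j ≠ i → (∑ x ∈ T j, g j x) = 1 := by
        intro j hj
        simp only [hgdef, if_neg hj]
        exact sum_dlapTrunc_shift hτ0 (u j) (hTu j)
      rw [Finset.prod_eq_single i (fun j _ hj => hother j hj) (fun h => absurd (Finset.mem_univ i) h)]
      have : (∑ x ∈ T i, g i x) = ∑ x ∈ T i, (if τ < |x - v i| then dlapTrunc a τ (x - u i) else 0) := by
        refine Finset.sum_congr rfl fun x _ => by simp only [hgdef, if_pos rfl]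
      rw [this]
      calc ∑ x ∈ T i, (if τ < |x - v i| then dlapTrunc a τ (x - u i) else 0)
          ≤ Real.exp (-a * ((τ : ℝ) - |((u i : ℤ) : ℝ) - v i|)) :=
            bad_marginal ha (u i) (v i) (hcoordτ i) (hTu i)
        _ ≤ Real.exp (-(a * ((τ : ℝ) - (Δ : ℝ)))) := by
            apply Real.exp_le_exp.mpr
            have e2 : |((u i : ℤ) : ℝ) - v i| = ((|u i - v i| : ℤ) : ℝ) := by push_cast; ring_nf
            rw [e2]
            have : ((|u i - v i| : ℤ) : ℝ) ≤ (Δ : ℝ) := by exact_mod_cast hcoord i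
            nlinarith [ha.le]
        _ ≤ δ / s := htail
    calc ∑ w ∈ S, (Gᶜ).indicator P w
        ≤ ∑ w ∈ S, ∑ i ∈ F, (if τ < |w i - v i| then P w else 0) := Finset.sum_le_sum hptw
      _ = ∑ i ∈ F, ∑ w ∈ S, (if τ < |w i - v i| then P w else 0) := Finset.sum_comm
      _ ≤ ∑ _i ∈ F, δ / s := Finset.sum_le_sum hmarg
      _ = F.card * (δ / s) := by rw [Finset.sum_const, nsmul_eq_mul]
      _ ≤ s * (δ / s) := by
          apply mul_le_mul_of_nonneg_right _ (by positivity)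
          exact_mod_cast hs
      _ = δ := by field_simp
  -- final assembly
  have hsplit : ∀ w, W.indicator P w = (W ∩ G).indicator P w + (W \ G).indicator P w := by
    intro w
    by_cases hw : w ∈ W <;> by_cases hg : w ∈ G <;>
      simp [Set.indicator_apply, hw, hg, Set.mem_inter_iff, Set.mem_diff]
  rw [hprobP, hprobQ, Finset.sum_congr rfl (fun w _ => hsplit w), Finset.sum_add_distrib]
  have hA : ∑ w ∈ S, (W ∩ G).indicator P w ≤ Real.exp ε * ∑ w ∈ S, W.indicator Q w := by
    rw [Finset.mul_sum]
    refine Finset.sum_le_sum fun w _ => ?_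
    by_cases hw : w ∈ W ∩ G
    · rw [Set.indicator_of_mem hw, Set.indicator_of_mem hw.1]
      exact hpoint w hw.2
    · rw [Set.indicator_of_notMem hw]
      exact mul_nonneg (Real.exp_pos _).le (Set.indicator_nonneg (fun x _ => hQnn x) w)
  have hB : ∑ w ∈ S, (W \ G).indicator P w ≤ δ := by
    refine le_trans (Finset.sum_le_sum fun w _ => ?_) hbad
    by_cases hw : w ∈ W \ G
    · rw [Set.indicator_of_mem hw, Set.indicator_of_mem (Set.mem_compl hw.2)]
    · rw [Set.indicator_of_notMem hw]
      exact Set.indicator_nonneg (fun x _ => hPnn x) w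
  linarith

end TDLap

theorem truncated_dlap_mechanism_approx_dp (d : ℕ) (ε δ : ℝ) (hε : 0 < ε)
    (hδ0 : 0 < δ) (hδ1 : δ ≤ 1) (Δ : ℕ) (hΔ : 0 < Δ) (s : ℕ)
    (u v : Fin d → ℤ) (h1 : (∑ i, |u i - v i|) ≤ (Δ : ℤ))
    (hs : (Finset.univ.filter (fun i => u i ≠ v i)).card ≤ s)
    (τ : ℤ) (hτ : (Δ : ℝ) * (1 + Real.log ((s : ℝ) / δ) / ε) ≤ (τ : ℝ)) :
    Indist ε δ
      (fun w : Fin d → ℤ => ∏ i, dlapTrunc (ε / Δ) τ (w i - u i))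
      (fun w : Fin d → ℤ => ∏ i, dlapTrunc (ε / Δ) τ (w i - v i)) := by
  classical
  rcases Nat.eq_zero_or_pos s with hs0 | hs1
  · -- s = 0 : u = v and the two distributions coincide
    subst hs0
    have hF : (Finset.univ.filter (fun i => u i ≠ v i)) = ∅ :=
      Finset.card_eq_zero.mp (le_antisymm hs (Nat.zero_le _))
    have huv : ∀ i, u i = v i := by
      intro i
      by_contra hne
      have : i ∈ (Finset.univ.filter (fun i => u i ≠ v i)) := by
        simp [hne]
      rw [hF] at this
      exact absurd this (Finset.notMem_empty i)
    have hPQ : (fun w : Fin d → ℤ => ∏ i, dlapTrunc (ε / Δ) τ (w i - u i))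
        = (fun w : Fin d → ℤ => ∏ i, dlapTrunc (ε / Δ) τ (w i - v i)) := by
      funext w
      exact Finset.prod_congr rfl fun i _ => by rw [huv i]
    rw [hPQ]
    intro W
    have hnn : 0 ≤ prob (fun w : Fin d → ℤ => ∏ i, dlapTrunc (ε / Δ) τ (w i - v i)) W :=
      TDLap.prob_nonneg (fun w => Finset.prod_nonneg fun i _ => TDLap.dlapTrunc_nonneg _ _ _) W
    have hexp : (1 : ℝ) ≤ Real.exp ε := Real.one_le_exp hε.le
    constructor <;> nlinarith
  · intro W
    constructor
    · exact TDLap.one_sided d ε δ hε hδ0 hδ1 Δ hΔ s hs1 u v h1 hs τ hτ W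
    · refine TDLap.one_sided d ε δ hε hδ0 hδ1 Δ hΔ s hs1 v u ?_ ?_ τ hτ W
      · refine le_trans (le_of_eq (Finset.sum_congr rfl fun i _ => abs_sub_comm (v i) (u i))) h1
      · refine le_trans (le_of_eq ?_) hs
        congr 1
        ext i
        simp [ne_comm]
end
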